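/- If C is a conjugation on ℂⁿ and T ∈ Mₙ(ℂ) has n distinct singular values, then T*T = C(TT*)C implies T = C T* C. -/

import Mathlib

open scoped ComplexConjugate
open Matrix

/-- Paper-convention inner product on ℂⁿ: ⟨x,y⟩ = ∑ xᵢ conj(yᵢ). -/
noncomputable def cinner {n : ℕ} (x y : Fin n → ℂ) : ℂ := ∑ i, x i * conj (y i)

/-- A conjugation on ℂⁿ: a conjugate-linear isometric involution. -/
structure Conjugation (n : ℕ) where
  toFun : (Fin n → ℂ) → (Fin n → ℂ)
  map_add : ∀ x y, toFun (x + y) = toFun x + toFun y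
  map_smul : ∀ (a : ℂ) (x), toFun (a • x) = conj a • toFun x
  isometric : ∀ x y, cinner (toFun x) (toFun y) = cinner y x
  involutive : ∀ x, toFun (toFun x) = x

/-- `T` is unitarily equivalent to a complex symmetric matrix. -/
def UECSM {n : ℕ} (T : Matrix (Fin n) (Fin n) ℂ) : Prop :=
  ∃ Q ∈ Matrix.unitaryGroup (Fin n) ℂ, (Qᴴ * T * Q)ᵀ = Qᴴ * T * Q

namespace ConjAux

variable {n : ℕ} (C : Conjugation n)

/-- The isometry property in dot-product form: ⟪C y, C x⟫ = ⟪x, y⟫. -/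
lemma iso_dot (x y : Fin n → ℂ) :
    star (C.toFun y) ⬝ᵥ C.toFun x = star x ⬝ᵥ y := by
  have h := C.isometric x y
  simp only [cinner, dotProduct, Pi.star_apply, RCLike.star_def] at *
  calc ∑ i, conj (C.toFun y i) * C.toFun x i
      = ∑ i, C.toFun x i * conj (C.toFun y i) := by simp [mul_comm]
    _ = ∑ i, y i * conj (x i) := h
    _ = ∑ i, conj (x i) * y i := by simp [mul_comm]

lemma map_zero : C.toFun 0 = 0 := by
  have h := C.map_smul 0 0
  simpa using h

lemma map_sum {ι : Type*} (s : Finset ι) (f : ι → Fin n → ℂ) :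
    C.toFun (∑ j ∈ s, f j) = ∑ j ∈ s, C.toFun (f j) := by
  classical
  induction s using Finset.induction with
  | empty => simpa using map_zero C
  | insert _ _ hj ih => simp [Finset.sum_insert hj, C.map_add, ih]

/-- Eigenvector uniqueness: if `v` is a spanning family of eigenvectors of a Hermitian
matrix `M` with pairwise-distinct real eigenvalues `μ`, then any eigenvector of `M`
with eigenvalue `μ i` is a multiple of `v i`. -/
lemma key (M : Matrix (Fin n) (Fin n) ℂ) (hM : M.IsHermitian)
    (μ : Fin n → ℝ) (hμ : Function.Injective μ)
    (v : Fin n → Fin n → ℂ) (hv : ∀ j, M *ᵥ v j = (μ j : ℂ) • v j)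
    (hspan : ∀ w : Fin n → ℂ, w = ∑ j, (star (v j) ⬝ᵥ w) • v j)
    (i : Fin n) (w : Fin n → ℂ) (hw : M *ᵥ w = (μ i : ℂ) • w) :
    w = (star (v i) ⬝ᵥ w) • v i := by
  classical
  have hc : ∀ j, j ≠ i → star (v j) ⬝ᵥ w = 0 := by
    intro j hj
    have h1 : star (v j) ⬝ᵥ (M *ᵥ w) = (μ i : ℂ) * (star (v j) ⬝ᵥ w) := by
      rw [hw, dotProduct_smul]; simp [smul_eq_mul]
    have h2 : star (v j) ⬝ᵥ (M *ᵥ w) = (μ j : ℂ) * (star (v j) ⬝ᵥ w) := by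
      have hvm : star (v j) ᵥ* M = (μ j : ℂ) • star (v j) := by
        have := congrArg star (hv j)
        rw [star_mulVec, hM.eq] at this
        rw [this, star_smul]
        simp
      rw [dotProduct_mulVec, hvm, smul_dotProduct]; simp [smul_eq_mul]
    have h3 : ((μ j : ℂ) - (μ i : ℂ)) * (star (v j) ⬝ᵥ w) = 0 := by
      rw [sub_mul, ← h1, ← h2, sub_self]
    rcases mul_eq_zero.mp h3 with h4 | h4
    · exfalso
      apply hj
      apply hμ
      have : (μ j : ℂ) = (μ i : ℂ) := by linear_combination h4
      exact_mod_cast this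
    · exact h4
  calc w = ∑ j, (star (v j) ⬝ᵥ w) • v j := hspan w
    _ = (star (v i) ⬝ᵥ w) • v i := by
        rw [Finset.sum_eq_single i]
        · intro j _ hj; rw [hc j hj, zero_smul]
        · intro hi; exact absurd (Finset.mem_univ i) hi

end ConjAux

theorem conj_symmetric_of_mul_star_conj {n : ℕ} (C : Conjugation n)
    (T : Matrix (Fin n) (Fin n) ℂ)
    (hdist : Function.Injective (Matrix.isHermitian_conjTranspose_mul_self T).eigenvalues)
    (h : ∀ x : Fin n → ℂ, (Tᴴ * T).mulVec x = C.toFun ((T * Tᴴ).mulVec (C.toFun x))) :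
    ∀ x : Fin n → ℂ, T.mulVec x = C.toFun (Tᴴ.mulVec (C.toFun x)) := by
  classical
  have hA := Matrix.isHermitian_conjTranspose_mul_self T
  have hB := Matrix.isHermitian_mul_conjTranspose_self T
  set A := Tᴴ * T with hAdef
  set B := T * Tᴴ with hBdef
  set b : OrthonormalBasis (Fin n) ℂ (EuclideanSpace ℂ (Fin n)) := hA.eigenvectorBasis with hbdef
  set μ : Fin n → ℝ := hA.eigenvalues with hμdef
  -- eigen equations for the basis of A
  have hv : ∀ j, A *ᵥ ⇑(b j) = (μ j : ℂ) • ⇑(b j) := by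
    intro j
    have := hA.mulVec_eigenvectorBasis j
    rw [this]
    funext k
    simp [Pi.smul_apply, Complex.real_smul]
    rfl
  -- span property for basis of A (in plain dot-product form)
  have hspan1 : ∀ w : Fin n → ℂ, w = ∑ j, (star (⇑(b j)) ⬝ᵥ w) • ⇑(b j) := fun w => by
    have := congrArg WithLp.ofLp (b.sum_repr' (WithLp.toLp 2 w))
    simp only [EuclideanSpace.inner_eq_star_dotProduct, WithLp.ofLp_sum, WithLp.ofLp_smul] at this
    simp only [dotProduct_comm _ (star _)] at this
    exact this.symm
  -- eigen equations for the C-twisted basis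
  have hBu : ∀ j, B *ᵥ C.toFun (⇑(b j)) = (μ j : ℂ) • C.toFun (⇑(b j)) := by
    intro j
    have h1 := h (⇑(b j))
    have h2 : C.toFun (A *ᵥ ⇑(b j)) = B *ᵥ C.toFun (⇑(b j)) := by
      rw [h1]; exact C.involutive _
    rw [← h2, hv j]
    have : ((μ j : ℂ) • ⇑(b j) : Fin n → ℂ) = ((μ j : ℂ)) • ⇑(b j) := rfl
    rw [C.map_smul]
    simp [Complex.conj_ofReal]
  -- span property for the C-twisted basis
  have hspan2 : ∀ w : Fin n → ℂ, w = ∑ j, (star (C.toFun ⇑(b j)) ⬝ᵥ w) • C.toFun ⇑(b j) := by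
    intro w
    have hco : ∀ j, (starRingEnd ℂ) (star (⇑(b j)) ⬝ᵥ C.toFun w) = star (C.toFun ⇑(b j)) ⬝ᵥ w := by
      intro j
      have h3 : star (C.toFun w) ⬝ᵥ ⇑(b j) = star (C.toFun ⇑(b j)) ⬝ᵥ w := by
        conv_lhs => rw [show ⇑(b j) = C.toFun (C.toFun ⇑(b j)) from (C.involutive _).symm]
        exact ConjAux.iso_dot C (C.toFun ⇑(b j)) w
      calc (starRingEnd ℂ) (star (⇑(b j)) ⬝ᵥ C.toFun w)
          = star (star (⇑(b j)) ⬝ᵥ C.toFun w) := rfl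
        _ = star (C.toFun w) ⬝ᵥ ⇑(b j) := by rw [star_dotProduct]; simp
        _ = star (C.toFun ⇑(b j)) ⬝ᵥ w := h3
    calc w = C.toFun (C.toFun w) := (C.involutive w).symm
      _ = C.toFun (∑ j, (star (⇑(b j)) ⬝ᵥ C.toFun w) • ⇑(b j)) := by rw [← hspan1]
      _ = ∑ j, C.toFun ((star (⇑(b j)) ⬝ᵥ C.toFun w) • ⇑(b j)) := ConjAux.map_sum C _ _
      _ = ∑ j, (star (C.toFun ⇑(b j)) ⬝ᵥ w) • C.toFun ⇑(b j) := by
          refine Finset.sum_congr rfl fun j _ => ?_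
          rw [C.map_smul, hco j]
  -- per-basis-vector statement
  have main : ∀ i, T *ᵥ ⇑(b i) = C.toFun (Tᴴ *ᵥ C.toFun ⇑(b i)) := by
    intro i
    set v : Fin n → ℂ := ⇑(b i) with hvdef
    set u : Fin n → ℂ := C.toFun v with hudef
    -- w1 = Tᴴ *ᵥ u is an eigenvector of A with eigenvalue μ i
    have hw1 : A *ᵥ (Tᴴ *ᵥ u) = (μ i : ℂ) • (Tᴴ *ᵥ u) := by
      rw [mulVec_mulVec, hAdef, Matrix.mul_assoc, ← hBdef, ← mulVec_mulVec, hBu i,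
        mulVec_smul]
    have hβ := ConjAux.key A hA μ hdist (fun j => ⇑(b j)) hv hspan1 i (Tᴴ *ᵥ u) hw1
    -- w2 = T *ᵥ v is an eigenvector of B with eigenvalue μ i
    have hw2 : B *ᵥ (T *ᵥ v) = (μ i : ℂ) • (T *ᵥ v) := by
      rw [mulVec_mulVec, hBdef, Matrix.mul_assoc, ← hAdef, ← mulVec_mulVec, hv i,
        mulVec_smul]
    have hα := ConjAux.key B hB μ hdist (fun j => C.toFun ⇑(b j)) hBu hspan2 i (T *ᵥ v) hw2
    -- relate the two coefficients
    have hcoef : star u ⬝ᵥ (T *ᵥ v) = (starRingEnd ℂ) (star v ⬝ᵥ (Tᴴ *ᵥ u)) := by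
      have e1 : (starRingEnd ℂ) (star v ⬝ᵥ (Tᴴ *ᵥ u)) = star (Tᴴ *ᵥ u) ⬝ᵥ v := by
        calc (starRingEnd ℂ) (star v ⬝ᵥ (Tᴴ *ᵥ u)) = star (star v ⬝ᵥ (Tᴴ *ᵥ u)) := rfl
          _ = star (Tᴴ *ᵥ u) ⬝ᵥ v := by rw [star_dotProduct]; simp
      rw [e1, star_mulVec, conjTranspose_conjTranspose, ← dotProduct_mulVec]
    have hα' : T *ᵥ v = (star u ⬝ᵥ (T *ᵥ v)) • u := by simpa using hα
    have hβ' : Tᴴ *ᵥ u = (star v ⬝ᵥ (Tᴴ *ᵥ u)) • v := by simpa using hβ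
    show T *ᵥ v = C.toFun (Tᴴ *ᵥ u)
    calc T *ᵥ v = (star u ⬝ᵥ (T *ᵥ v)) • u := hα'
      _ = (starRingEnd ℂ) (star v ⬝ᵥ (Tᴴ *ᵥ u)) • u := by rw [hcoef]
      _ = C.toFun ((star v ⬝ᵥ (Tᴴ *ᵥ u)) • v) := (C.map_smul _ _).symm
      _ = C.toFun (Tᴴ *ᵥ u) := by rw [← hβ']
  -- linearity reduction
  intro x
  set c : Fin n → ℂ := fun j => star (⇑(b j)) ⬝ᵥ x with hcdef
  have hx : x = ∑ j, c j • ⇑(b j) := hspan1 x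
  have lhs_eq : T *ᵥ x = ∑ j, c j • (T *ᵥ ⇑(b j)) := by
    conv_lhs => rw [hx]
    rw [show (T *ᵥ ∑ j, c j • ⇑(b j)) = T.mulVecLin (∑ j, c j • ⇑(b j)) from rfl,
      map_sum]
    refine Finset.sum_congr rfl fun j _ => ?_
    rw [_root_.map_smul]
    rfl
  have hCx : C.toFun x = ∑ j, (starRingEnd ℂ) (c j) • C.toFun ⇑(b j) := by
    conv_lhs => rw [hx]
    rw [ConjAux.map_sum]
    exact Finset.sum_congr rfl fun j _ => C.map_smul _ _
  have hTCx : Tᴴ *ᵥ C.toFun x = ∑ j, (starRingEnd ℂ) (c j) • (Tᴴ *ᵥ C.toFun ⇑(b j)) := by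
    rw [hCx, show (Tᴴ *ᵥ ∑ j, (starRingEnd ℂ) (c j) • C.toFun ⇑(b j))
        = Tᴴ.mulVecLin (∑ j, (starRingEnd ℂ) (c j) • C.toFun ⇑(b j)) from rfl, map_sum]
    refine Finset.sum_congr rfl fun j _ => ?_
    rw [_root_.map_smul]
    rfl
  have rhs_eq : C.toFun (Tᴴ *ᵥ C.toFun x) = ∑ j, c j • C.toFun (Tᴴ *ᵥ C.toFun ⇑(b j)) := by
    rw [hTCx, ConjAux.map_sum]
    refine Finset.sum_congr rfl fun j _ => ?_
    rw [C.map_smul]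
    simp
  rw [lhs_eq, rhs_eq]
  exact Finset.sum_congr rfl fun j _ => by rw [main j]
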